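/- Proposition (stable cells of W_k). For each j ∈ {0,…,k}, the stable cell of W_k at the vertex e_j, namely the set {x ∈ Δ_k : there exists a trajectory γ of W_k with γ(t) ∈ Δ_k for all t, γ(0) = x, and γ(t) → e_j as t → +∞}, is equal to the set {x ∈ Δ_k : x_i = 0 for every i > j, and x_j > 0} (the face of Δ_k spanned by the vertices e_0, …, e_j minus its sub-face spanned by e_0, …, e_{j−1}). -/

import Mathlib

open Finset Filter

/-- The simplicial vector field `W_k` on `ℝ^{k+1}`, given componentwise by
`(W_k x)_m = x_m * (∑_{i<m} x_i − ∑_{i>m} x_i)`. -/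
noncomputable def Wfield (k : ℕ) (x : Fin (k + 1) → ℝ) : Fin (k + 1) → ℝ :=
  fun m => x m * ((∑ i ∈ univ.filter (fun i => i < m), x i)
                - (∑ i ∈ univ.filter (fun i => m < i), x i))

/-- partial sum of the first `m` coordinates -/
noncomputable def psum (k : ℕ) (f : Fin (k + 1) → ℝ) (m : ℕ) : ℝ :=
  ∑ i ∈ univ.filter (fun i : Fin (k + 1) => (i : ℕ) < m), f i

lemma psum_zero (k : ℕ) (f : Fin (k + 1) → ℝ) : psum k f 0 = 0 := by
  simp [psum]

lemma psum_succ (k : ℕ) (f : Fin (k + 1) → ℝ) (m : ℕ) (hm : m < k + 1) :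
    psum k f (m + 1) = psum k f m + f ⟨m, hm⟩ := by
  have h : univ.filter (fun i : Fin (k + 1) => (i : ℕ) < m + 1)
      = insert ⟨m, hm⟩ (univ.filter (fun i : Fin (k + 1) => (i : ℕ) < m)) := by
    ext i
    simp [Nat.lt_succ_iff_lt_or_eq, Fin.ext_iff, or_comm]
    exact le_iff_eq_or_lt
  rw [psum, h, Finset.sum_insert (by simp), psum]
  ring

lemma psum_big (k : ℕ) (f : Fin (k + 1) → ℝ) (m : ℕ) (hm : k + 1 ≤ m) :
    psum k f m = ∑ i, f i := by
  rw [psum]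
  congr 1
  apply Finset.filter_true_of_mem
  intro i _
  exact lt_of_lt_of_le i.isLt hm

lemma psum_fin (k : ℕ) (f : Fin (k + 1) → ℝ) (m : Fin (k + 1)) :
    ∑ i ∈ univ.filter (fun i => i < m), f i = psum k f m := rfl

lemma sum_gt (k : ℕ) (f : Fin (k + 1) → ℝ) (m : Fin (k + 1)) :
    ∑ i ∈ univ.filter (fun i => m < i), f i
      = (∑ i, f i) - f m - psum k f (m : ℕ) := by
  have h1 := Finset.sum_filter_add_sum_filter_not univ (fun i : Fin (k + 1) => i < m) f
  have h2 : univ.filter (fun i : Fin (k + 1) => ¬ i < m)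
      = insert m (univ.filter (fun i : Fin (k + 1) => m < i)) := by
    ext i
    simp only [Finset.mem_filter, Finset.mem_univ, true_and, Finset.mem_insert, not_lt]
    constructor
    · intro h
      rcases eq_or_lt_of_le h with h | h
      · exact Or.inl h.symm
      · exact Or.inr h
    · rintro (rfl | h)
      · exact le_refl _
      · exact le_of_lt h
  rw [h2, Finset.sum_insert (by simp), psum_fin k f m] at h1
  linarith

lemma Wfield_apply (k : ℕ) (y : Fin (k + 1) → ℝ) (hy : ∑ i, y i = 1) (m : Fin (k + 1)) :
    Wfield k y m
      = ((psum k y ((m : ℕ) + 1)) ^ 2 - psum k y ((m : ℕ) + 1))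
        - ((psum k y (m : ℕ)) ^ 2 - psum k y (m : ℕ)) := by
  have hs : psum k y ((m : ℕ) + 1) = psum k y (m : ℕ) + y m := by
    rw [psum_succ k y (m : ℕ) m.isLt]
  rw [Wfield, psum_fin k y m, sum_gt k y m, hy, hs]
  ring

lemma psum_W (k : ℕ) (y : Fin (k + 1) → ℝ) (hy : ∑ i, y i = 1) (m : ℕ) :
    psum k (Wfield k y) m = (psum k y m) ^ 2 - psum k y m := by
  induction m with
  | zero => simp [psum_zero]
  | succ m ih =>
    by_cases hm : m < k + 1
    · rw [psum_succ k _ m hm, ih, Wfield_apply k y hy ⟨m, hm⟩]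
      ring
    · push_neg at hm
      rw [psum_big k _ (m + 1) (le_trans hm (Nat.le_succ m)),
        ← psum_big k (Wfield k y) m hm, ih,
        psum_big k y (m + 1) (le_trans hm (Nat.le_succ m)), ← psum_big k y m hm]

lemma denom_pos (c t : ℝ) (h0 : 0 ≤ c) (h1 : c ≤ 1) : 0 < c + (1 - c) * Real.exp t := by
  rcases eq_or_lt_of_le h0 with h | h
  · rw [← h]; simpa using Real.exp_pos t
  · have : 0 ≤ (1 - c) * Real.exp t := mul_nonneg (by linarith) (Real.exp_pos t).le
    linarith

lemma frac_mono (a b t : ℝ) (ha : 0 ≤ a) (hab : a ≤ b) (hb : b ≤ 1) :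
    a / (a + (1 - a) * Real.exp t) ≤ b / (b + (1 - b) * Real.exp t) := by
  rw [div_le_div_iff₀ (denom_pos a t ha (le_trans hab hb)) (denom_pos b t (le_trans ha hab) hb)]
  have he := (Real.exp_pos t).le
  nlinarith

lemma frac_deriv (a t : ℝ) (ha : 0 ≤ a) (ha1 : a ≤ 1) :
    HasDerivAt (fun t => a / (a + (1 - a) * Real.exp t))
      ((a / (a + (1 - a) * Real.exp t)) ^ 2 - a / (a + (1 - a) * Real.exp t)) t := by
  have hd : HasDerivAt (fun t => a + (1 - a) * Real.exp t) ((1 - a) * Real.exp t) t := by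
    simpa using ((Real.hasDerivAt_exp t).const_mul (1 - a)).const_add a
  have hne : a + (1 - a) * Real.exp t ≠ 0 := (denom_pos a t ha ha1).ne'
  have := (hasDerivAt_const t a).fun_div hd hne
  refine this.congr_deriv ?_
  field_simp
  ring

/-- Stable cells of `W_k`: the set of points of `Δ_k` lying on a trajectory
converging to the vertex `e_j` as `t → +∞` is exactly
`{x ∈ Δ_k : x_i = 0 for i > j, and x_j > 0}`. -/
theorem Wfield_stable_cell (k : ℕ) (j : Fin (k + 1)) :
    {x : Fin (k + 1) → ℝ | x ∈ stdSimplex ℝ (Fin (k + 1)) ∧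
      ∃ γ : ℝ → Fin (k + 1) → ℝ,
        (∀ t : ℝ, HasDerivAt γ (Wfield k (γ t)) t) ∧
        (∀ t : ℝ, γ t ∈ stdSimplex ℝ (Fin (k + 1))) ∧
        γ 0 = x ∧
        Tendsto γ atTop (nhds (Pi.single j 1))}
    = {x : Fin (k + 1) → ℝ | x ∈ stdSimplex ℝ (Fin (k + 1)) ∧
        (∀ i : Fin (k + 1), j < i → x i = 0) ∧ 0 < x j} := by
  ext x
  simp only [Set.mem_setOf_eq]
  constructor
  · rintro ⟨hx, γ, hder, hmem, h0, hlim⟩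
    refine ⟨hx, ?_⟩
    set Q : ℕ → ℝ → ℝ := fun m t => psum k (γ t) m with hQdef
    have hQder : ∀ m t, HasDerivAt (Q m) ((Q m t) ^ 2 - Q m t) t := by
      intro m t
      have h1 : ∀ i : Fin (k + 1), HasDerivAt (fun s => γ s i) (Wfield k (γ t) i) t :=
        fun i => hasDerivAt_pi.mp (hder t) i
      have h2 : HasDerivAt (fun s => psum k (γ s) m) (psum k (Wfield k (γ t)) m) t :=
        HasDerivAt.fun_sum (fun i _ => h1 i)
      rw [psum_W k (γ t) (hmem t).2 m] at h2
      exact h2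
    have hQ01 : ∀ m t, 0 ≤ Q m t ∧ Q m t ≤ 1 := by
      intro m t
      constructor
      · exact Finset.sum_nonneg fun i _ => (hmem t).1 i
      · rw [hQdef]
        show psum k (γ t) m ≤ 1
        rw [← (hmem t).2]
        exact Finset.sum_le_sum_of_subset_of_nonneg (Finset.filter_subset _ _)
          (fun i _ _ => (hmem t).1 i)
    have hanti : ∀ m, Antitone (Q m) := fun m =>
      antitone_of_deriv_nonpos (fun t => (hQder m t).differentiableAt)
        (fun t => by
          rw [(hQder m t).deriv]
          nlinarith [(hQ01 m t).1, (hQ01 m t).2])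
    have hQlim : ∀ m, Tendsto (Q m) atTop (nhds (if (j : ℕ) < m then 1 else 0)) := by
      intro m
      have h1 : ∀ i : Fin (k + 1), Tendsto (fun t => γ t i) atTop (nhds (Pi.single (M := fun _ : Fin (k+1) => ℝ) j 1 i)) :=
        fun i => tendsto_pi_nhds.mp hlim i
      have h2 : Tendsto (Q m) atTop
          (nhds (∑ i ∈ univ.filter (fun i : Fin (k + 1) => (i : ℕ) < m),
            Pi.single (M := fun _ : Fin (k+1) => ℝ) j 1 i)) :=
        tendsto_finset_sum _ (fun i _ => h1 i)
      have h3 : (∑ i ∈ univ.filter (fun i : Fin (k + 1) => (i : ℕ) < m),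
          Pi.single (M := fun _ : Fin (k+1) => ℝ) j 1 i) = if (j : ℕ) < m then 1 else 0 := by
        simp only [Pi.single_apply]
        rw [Finset.sum_ite_eq' (univ.filter (fun i : Fin (k + 1) => (i : ℕ) < m)) j
          (fun _ => (1 : ℝ))]
        simp
      rwa [h3] at h2
    have hQ0 : ∀ m, (j : ℕ) < m → Q m 0 = 1 := by
      intro m hm
      have h1 : (1 : ℝ) ≤ Q m 0 := by
        have h2 : Tendsto (Q m) atTop (nhds 1) := by simpa [hm] using hQlim m
        exact le_of_tendsto h2 (eventually_atTop.mpr ⟨0, fun t ht => hanti m ht⟩)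
      linarith [(hQ01 m 0).2]
    have hcoord : ∀ i : Fin (k + 1), x i = Q ((i : ℕ) + 1) 0 - Q (i : ℕ) 0 := by
      intro i
      have h := psum_succ k (γ 0) (i : ℕ) i.isLt
      simp only [Fin.eta, h0] at h
      have e : ∀ m, Q m 0 = psum k x m := fun m => by rw [hQdef]; simp [h0]
      rw [e, e, h]
      ring
    constructor
    · intro i hij
      rw [Fin.lt_def] at hij
      rw [hcoord i, hQ0 _ (by omega), hQ0 _ hij, sub_self]
    · have hupper : Q ((j : ℕ) + 1) 0 = 1 := hQ0 _ (Nat.lt_succ_self _)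
      have hlt : Q (j : ℕ) 0 < 1 := by
        rcases lt_or_eq_of_le (hQ01 (j : ℕ) 0).2 with h | h
        · exact h
        · exfalso
          have hv : ∀ t : ℝ, LipschitzOnWith 1 (fun q : ℝ => q ^ 2 - q) (Set.Icc (0 : ℝ) 1) := by
            intro t
            rw [lipschitzOnWith_iff_dist_le_mul]
            intro p hp q hq
            rw [Real.dist_eq, Real.dist_eq]
            push_cast
            rw [abs_le]
            rcases abs_cases (p - q) with ⟨h1, h2⟩ | ⟨h1, h2⟩ <;>
              constructor <;> nlinarith [hp.1, hp.2, hq.1, hq.2]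
          have huniq : ∀ T : ℝ, 0 ≤ T → Q (j : ℕ) T = 1 := by
            intro T hT
            have heq := ODE_solution_unique_of_mem_Icc_right
              (v := fun _ q => q ^ 2 - q) (s := fun _ => Set.Icc (0 : ℝ) 1) (K := 1)
              (fun t _ => hv t)
              (f := Q (j : ℕ)) (g := fun _ => (1 : ℝ)) (a := 0) (b := T)
              (Differentiable.continuous
                (fun t => (hQder (j : ℕ) t).differentiableAt)).continuousOn
              (fun t _ => (hQder (j : ℕ) t).hasDerivWithinAt)
              (fun t _ => ⟨(hQ01 _ t).1, (hQ01 _ t).2⟩)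
              continuousOn_const
              (fun t _ => by
                have : HasDerivWithinAt (fun _ : ℝ => (1 : ℝ)) 0 (Set.Ici t) t :=
                  (hasDerivAt_const t (1 : ℝ)).hasDerivWithinAt
                simpa using this)
              (fun t _ => by norm_num)
              h
            exact heq ⟨hT, le_refl T⟩
          have hconst : Tendsto (Q (j : ℕ)) atTop (nhds 1) := by
            have hev : (fun _ : ℝ => (1 : ℝ)) =ᶠ[atTop] Q (j : ℕ) :=
              eventually_atTop.mpr ⟨0, fun t ht => (huniq t ht).symm⟩
            exact Tendsto.congr' hev tendsto_const_nhds
          have hz : Tendsto (Q (j : ℕ)) atTop (nhds 0) := by simpa using hQlim (j : ℕ)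
          have : (0 : ℝ) = 1 := tendsto_nhds_unique hz hconst
          norm_num at this
      rw [hcoord j, hupper]
      linarith
  · rintro ⟨hx, hzero, hj⟩
    refine ⟨hx, ?_⟩
    set a : ℕ → ℝ := psum k x with ha
    have ha0 : ∀ m, 0 ≤ a m := fun m => Finset.sum_nonneg fun i _ => hx.1 i
    have ha1 : ∀ m, a m ≤ 1 := fun m => by
      rw [ha]
      show psum k x m ≤ 1
      rw [← hx.2]
      exact Finset.sum_le_sum_of_subset_of_nonneg (Finset.filter_subset _ _)
        (fun i _ _ => hx.1 i)
    have hamono : Monotone a := by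
      intro m n hmn
      apply Finset.sum_le_sum_of_subset_of_nonneg
      · intro i
        simp only [Finset.mem_filter, Finset.mem_univ, true_and]
        exact fun h => lt_of_lt_of_le h hmn
      · exact fun i _ _ => hx.1 i
    have hsucc : ∀ i : Fin (k + 1), a ((i : ℕ) + 1) = a (i : ℕ) + x i := by
      intro i
      have h := psum_succ k x (i : ℕ) i.isLt
      simp only [Fin.eta] at h
      rw [ha]
      exact h
    have hajlt : a (j : ℕ) < 1 := by
      have h := hsucc j
      have := ha1 ((j : ℕ) + 1)
      linarith
    have hatop : ∀ m, (j : ℕ) < m → a m = 1 := by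
      intro m hm
      have h1 := Finset.sum_filter_add_sum_filter_not univ (fun i : Fin (k + 1) => (i : ℕ) < m) x
      have h2 : ∑ i ∈ univ.filter (fun i : Fin (k + 1) => ¬ (i : ℕ) < m), x i = 0 := by
        apply Finset.sum_eq_zero
        intro i hi
        simp only [Finset.mem_filter, Finset.mem_univ, true_and, not_lt] at hi
        exact hzero i (by rw [Fin.lt_def]; omega)
      rw [h2, add_zero, hx.2] at h1
      rw [ha]
      exact h1
    have hak1 : a (k + 1) = 1 := by
      rw [ha, psum_big k x (k + 1) le_rfl]
      exact hx.2
    set q : ℕ → ℝ → ℝ := fun m t => a m / (a m + (1 - a m) * Real.exp t) with hq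
    have hq0 : ∀ t, q 0 t = 0 := by
      intro t
      have : a 0 = 0 := by rw [ha]; exact psum_zero k x
      simp [hq, this]
    have hqtop : ∀ m, a m = 1 → ∀ t, q m t = 1 := by
      intro m hm t
      rw [hq]
      show a m / (a m + (1 - a m) * Real.exp t) = 1
      rw [hm]
      norm_num
    have hdenom : ∀ m t, 0 < a m + (1 - a m) * Real.exp t :=
      fun m t => denom_pos _ _ (ha0 m) (ha1 m)
    have hqmono : ∀ m t, q m t ≤ q (m + 1) t :=
      fun m t => frac_mono _ _ t (ha0 m) (hamono (Nat.le_succ m)) (ha1 (m + 1))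
    set γ : ℝ → Fin (k + 1) → ℝ := fun t i => q ((i : ℕ) + 1) t - q (i : ℕ) t with hγ
    have hpsγ : ∀ t, ∀ m, m ≤ k + 1 → psum k (γ t) m = q m t := by
      intro t m
      induction m with
      | zero => intro _; rw [psum_zero, hq0]
      | succ m ih =>
        intro hm
        rw [psum_succ k _ m (by omega), ih (by omega)]
        show q m t + (q (m + 1) t - q m t) = q (m + 1) t
        ring
    have hsimplex : ∀ t, γ t ∈ stdSimplex ℝ (Fin (k + 1)) := by
      intro t
      constructor
      · intro i
        exact sub_nonneg.mpr (hqmono (i : ℕ) t)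
      · have h1 := hpsγ t (k + 1) le_rfl
        rw [psum_big k (γ t) (k + 1) le_rfl] at h1
        rw [h1]
        exact hqtop (k + 1) hak1 t
    refine ⟨γ, ?_, hsimplex, ?_, ?_⟩
    · intro t
      rw [hasDerivAt_pi]
      intro i
      have h1 := frac_deriv (a ((i : ℕ) + 1)) t (ha0 _) (ha1 _)
      have h2 := frac_deriv (a (i : ℕ)) t (ha0 _) (ha1 _)
      have h3 := h1.sub h2
      have hW : Wfield k (γ t) i
          = ((q ((i : ℕ) + 1) t) ^ 2 - q ((i : ℕ) + 1) t)
            - ((q (i : ℕ) t) ^ 2 - q (i : ℕ) t) := by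
        rw [Wfield_apply k (γ t) (hsimplex t).2 i, hpsγ t ((i : ℕ) + 1) i.isLt,
          hpsγ t (i : ℕ) (le_of_lt i.isLt)]
      rw [hW]
      exact h3
    · funext i
      have e : ∀ m, q m 0 = a m := by
        intro m
        rw [hq]
        show a m / (a m + (1 - a m) * Real.exp 0) = a m
        rw [Real.exp_zero]
        have : a m + (1 - a m) * 1 = 1 := by ring
        rw [this, div_one]
      show q ((i : ℕ) + 1) 0 - q (i : ℕ) 0 = x i
      rw [e, e, hsucc i]
      ring
    · rw [tendsto_pi_nhds]
      intro i
      have hzeroLim : ∀ m, a m < 1 → Tendsto (fun t => q m t) atTop (nhds 0) := by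
        intro m hm
        have hd : Tendsto (fun t => a m + (1 - a m) * Real.exp t) atTop atTop := by
          apply tendsto_atTop_add_const_left
          exact Real.tendsto_exp_atTop.const_mul_atTop (by linarith)
        exact tendsto_const_nhds.div_atTop hd
      have hγi : ∀ t, γ t i = q ((i : ℕ) + 1) t - q (i : ℕ) t := fun t => rfl
      rcases lt_trichotomy i j with h | h | h
      · have hfl : (i : ℕ) < (j : ℕ) := h
        have hi1 : a ((i : ℕ) + 1) < 1 := lt_of_le_of_lt (hamono (by omega)) hajlt
        have hi0 : a (i : ℕ) < 1 := lt_of_le_of_lt (hamono (by omega)) hajlt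
        have hT := (hzeroLim _ hi1).sub (hzeroLim _ hi0)
        have hs : Pi.single (M := fun _ : Fin (k+1) => ℝ) j 1 i = 0 := Pi.single_eq_of_ne (ne_of_lt h) 1
        rw [hs]
        simpa using hT
      · rw [h]
        have h2 : a ((j : ℕ) + 1) = 1 := hatop _ (Nat.lt_succ_self _)
        have hT : Tendsto (fun t => q ((j : ℕ) + 1) t - q (j : ℕ) t) atTop (nhds (1 - 0)) :=
          (tendsto_const_nhds.congr (fun t => (hqtop _ h2 t).symm)).sub (hzeroLim _ hajlt)
        have hs : Pi.single (M := fun _ : Fin (k+1) => ℝ) j 1 j = 1 := Pi.single_eq_same j 1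
        rw [hs]
        simpa using hT
      · have hfl : (j : ℕ) < (i : ℕ) := h
        have h2 : a ((i : ℕ) + 1) = 1 := hatop _ (by omega)
        have h3 : a (i : ℕ) = 1 := hatop _ hfl
        have hT : Tendsto (fun t => q ((i : ℕ) + 1) t - q (i : ℕ) t) atTop (nhds (1 - 1)) :=
          (tendsto_const_nhds.congr (fun t => (hqtop _ h2 t).symm)).sub
            (tendsto_const_nhds.congr (fun t => (hqtop _ h3 t).symm))
        have hs : Pi.single (M := fun _ : Fin (k+1) => ℝ) j 1 i = 0 := Pi.single_eq_of_ne (ne_of_gt h) 1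
        rw [hs]
        simpa using hT
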